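/- arXiv:0907.1520 — 2 statements merged into one kernel-verified Lean document; each statement's English description precedes it below -/
import Mathlib

section
/- In any idempotent right quasigroup (X, *, \), for all x, u, v, w in X the generalized associativity relation u +^x (v +^{x*u} w) = (u +^x v) +^x w holds, where +^{x*u} denotes the sum operation based at the point x * u. -/
/-- An idempotent right quasigroup (irq): a set with operations `*` (mul) and `\` (div)
satisfying (P1) `x * (x \ y) = x \ (x * y) = y` and (P2) `x * x = x \ x = x`. -/
structure IRQ (X : Type*) where
  mul : X → X → X
  div : X → X → X
  mul_div : ∀ x y, mul x (div x y) = y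
  div_mul : ∀ x y, div x (mul x y) = y
  mul_self : ∀ x, mul x x = x
  div_self : ∀ x, div x x = x

namespace IRQ

variable {X : Type*}

/-- The difference operation based at `x`: `dif Q x u v = v -^x u = (x * u) \ (x * v)`. -/
def dif (Q : IRQ X) (x u v : X) : X := Q.div (Q.mul x u) (Q.mul x v)

/-- The sum operation based at `x`: `sum Q x u v = u +^x v = x \ ((x * u) * v)`. -/
def sum (Q : IRQ X) (x u v : X) : X := Q.div x (Q.mul (Q.mul x u) v)

/-- The inverse operation based at `x`: `neg Q x u = -^x u = (x * u) \ x`. -/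
def neg (Q : IRQ X) (x u : X) : X := Q.div (Q.mul x u) x

end IRQ

/-- In any irq, the generalized associativity relation
`u +^x (v +^{x*u} w) = (u +^x v) +^x w`. -/
theorem irq_gen_assoc {X : Type*} (Q : IRQ X) (x u v w : X) :
    Q.sum x u (Q.sum (Q.mul x u) v w) = Q.sum x (Q.sum x u v) w := by simp [IRQ.sum, Q.mul_div]
end

section
/- In any distributive idempotent right quasigroup (X, *, \) and for any k ≥ 1, the difference and sum operations of (X, *_k, \_k) satisfy (xyz)_k = x *_k (y \_k z) and )xyz(_k = y *_k (x \_k z); consequently )xyz(_k = (yxz)_k for all x, y, z, i.e. the sum based at x of y and z equals the difference based at y of x and z. -/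
namespace IRQ

variable {X : Type*}

/-- Iterated operation `x *_k u` for `k : ℕ` (with `x *_0 u = u`, `x *_{k+1} u = x * (x *_k u)`). -/
def mulIter (Q : IRQ X) : ℕ → X → X → X
  | 0, _, u => u
  | n + 1, x, u => Q.mul x (Q.mulIter n x u)

/-- Iterated operation `x \_k u` for `k : ℕ`. -/
def divIter (Q : IRQ X) : ℕ → X → X → X
  | 0, _, u => u
  | n + 1, x, u => Q.div x (Q.divIter n x u)

end IRQ

namespace IRQ

variable {X : Type*}

/-- The difference operation of the irq `(X, *_k, \_k)` based at `x`:
`(xuv)_k = (x *_k u) \_k (x *_k v)`. -/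
def difIter (Q : IRQ X) (k : ℕ) (x u v : X) : X :=
  Q.divIter k (Q.mulIter k x u) (Q.mulIter k x v)

/-- The sum operation of the irq `(X, *_k, \_k)` based at `x`:
`)xuv(_k = x \_k ((x *_k u) *_k v)`. -/
def sumIter (Q : IRQ X) (k : ℕ) (x u v : X) : X :=
  Q.divIter k x (Q.mulIter k (Q.mulIter k x u) v)

end IRQ

section Aux

variable {X : Type*} (Q : IRQ X)
variable (hd : ∀ x y z : X, Q.mul x (Q.mul y z) = Q.mul (Q.mul x y) (Q.mul x z))
include hd

/-- `mul x` preserves `div`. -/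
lemma aux_mul_div (x u v : X) :
    Q.mul x (Q.div u v) = Q.div (Q.mul x u) (Q.mul x v) := by
  have h : Q.mul (Q.mul x u) (Q.mul x (Q.div u v)) = Q.mul x v := by
    rw [← hd, Q.mul_div]
  calc Q.mul x (Q.div u v)
      = Q.div (Q.mul x u) (Q.mul (Q.mul x u) (Q.mul x (Q.div u v))) :=
        (Q.div_mul _ _).symm
    _ = Q.div (Q.mul x u) (Q.mul x v) := by rw [h]

/-- `div x` preserves `mul`. -/
lemma aux_div_mul (x u v : X) :
    Q.div x (Q.mul u v) = Q.mul (Q.div x u) (Q.div x v) := by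
  conv_lhs => rw [← Q.mul_div x u, ← Q.mul_div x v, ← hd, Q.div_mul]

/-- `div x` preserves `div`. -/
lemma aux_div_div (x u v : X) :
    Q.div x (Q.div u v) = Q.div (Q.div x u) (Q.div x v) := by
  conv_lhs => rw [← Q.mul_div x u, ← Q.mul_div x v,
    ← aux_mul_div Q hd x (Q.div x u) (Q.div x v), Q.div_mul]

lemma aux_mulIter_mul (k : ℕ) (x u v : X) :
    Q.mulIter k x (Q.mul u v) = Q.mul (Q.mulIter k x u) (Q.mulIter k x v) := by
  induction k with
  | zero => rfl
  | succ n ih => simp only [IRQ.mulIter, ih]; exact hd _ _ _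

lemma aux_mulIter_div (k : ℕ) (x u v : X) :
    Q.mulIter k x (Q.div u v) = Q.div (Q.mulIter k x u) (Q.mulIter k x v) := by
  induction k with
  | zero => rfl
  | succ n ih => simp only [IRQ.mulIter, ih, aux_mul_div Q hd]

lemma aux_divIter_mul (k : ℕ) (x u v : X) :
    Q.divIter k x (Q.mul u v) = Q.mul (Q.divIter k x u) (Q.divIter k x v) := by
  induction k with
  | zero => rfl
  | succ n ih => simp only [IRQ.divIter, ih, aux_div_mul Q hd]

omit hd in
lemma aux_mulIter_succ' (k : ℕ) (x u : X) :
    Q.mulIter (k + 1) x u = Q.mulIter k x (Q.mul x u) := by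
  induction k with
  | zero => rfl
  | succ n ih => show Q.mul x (Q.mulIter (n+1) x u) = _; rw [ih]; rfl

omit hd in
lemma aux_divIter_mulIter (k : ℕ) (x u : X) :
    Q.divIter k x (Q.mulIter k x u) = u := by
  induction k generalizing u with
  | zero => rfl
  | succ n ih =>
    rw [aux_mulIter_succ']
    show Q.div x (Q.divIter n x (Q.mulIter n x (Q.mul x u))) = u
    rw [ih, Q.div_mul]

/-- `mulIter k x` commutes with `divIter n` in the automorphism sense. -/
lemma aux_mulIter_divIter (k n : ℕ) (x u v : X) :
    Q.mulIter k x (Q.divIter n u v)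
      = Q.divIter n (Q.mulIter k x u) (Q.mulIter k x v) := by
  induction n with
  | zero => rfl
  | succ m ih => simp only [IRQ.divIter, aux_mulIter_div Q hd, ih]

/-- `divIter k x` commutes with `mulIter n` in the automorphism sense. -/
lemma aux_divIter_mulIter' (k n : ℕ) (x u v : X) :
    Q.divIter k x (Q.mulIter n u v)
      = Q.mulIter n (Q.divIter k x u) (Q.divIter k x v) := by
  induction n with
  | zero => rfl
  | succ m ih => simp only [IRQ.mulIter, aux_divIter_mul Q hd, ih]

end Aux

/-- In a distributive irq, for any `k ≥ 1`: `(xyz)_k = x *_k (y \_k z)`,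
`)xyz(_k = y *_k (x \_k z)`, and consequently `)xyz(_k = (yxz)_k`. -/
theorem irq_distrib_sum_dif_iter {X : Type*} (Q : IRQ X)
    (hd : ∀ x y z : X, Q.mul x (Q.mul y z) = Q.mul (Q.mul x y) (Q.mul x z))
    (k : ℕ) (hk : 1 ≤ k) :
    (∀ x y z : X, Q.difIter k x y z = Q.mulIter k x (Q.divIter k y z)) ∧
    (∀ x y z : X, Q.sumIter k x y z = Q.mulIter k y (Q.divIter k x z)) ∧
    (∀ x y z : X, Q.sumIter k x y z = Q.difIter k y x z) := by
  have hdif : ∀ x y z : X, Q.difIter k x y z = Q.mulIter k x (Q.divIter k y z) := by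
    intro x y z
    rw [IRQ.difIter, aux_mulIter_divIter Q hd k k x y z]
  have hsum : ∀ x y z : X, Q.sumIter k x y z = Q.mulIter k y (Q.divIter k x z) := by
    intro x y z
    rw [IRQ.sumIter, aux_divIter_mulIter' Q hd k k x (Q.mulIter k x y) z,
      aux_divIter_mulIter Q k x y]
  exact ⟨hdif, hsum, fun x y z => by rw [hsum, hdif]⟩
end
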